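/- Let n ≥ 3 be an odd integer and q > 0 a real number. Define ẽ^q_{n+i} = (−1)^i Σ_{(X′,X″)∈Ω_{n+i}} (−q)^{I_{n+i}(X′)} e_{X′} ⊗ e_{X″} in S ⊗ S, and put v_q = Σ_{i=1}^n q^i e_{{i}} ⊗ ẽ^q_{n+i} and w_q = Σ_{j=1}^n q^{−j} ẽ^q_{n+j} ⊗ e_{{j}} in S ⊗ S ⊗ S, equipped with the inner product making the vectors e_A ⊗ e_B ⊗ e_C orthonormal. Then (−1)^{(n+1)/2} · ⟨v_q, w_q⟩ > 0; in particular ⟨v_q, w_q⟩ ≠ 0. -/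

import Mathlib

open scoped Classical ComplexOrder

noncomputable section

/-- Subsets of `{1,…,n}`, the index set for the basis of the spinor space `S`. -/
abbrev SIdx (n : ℕ) : Type := {X : Finset ℕ // X ∈ (Finset.Icc 1 n).powerset}

/-- `I₁(X) = Σ_{k∈X} k − |X|·n`. -/
def I1 (n : ℕ) (X : Finset ℕ) : ℤ := (∑ k ∈ X, (k : ℤ)) - X.card * n

/-- `I_{n+i}(X) = I₁(X) + |{k ∈ X : k < i}| − (n−1)`. -/
def Ihigh (n i : ℕ) (X : Finset ℕ) : ℤ :=
  I1 n X + ((X.filter (fun k => k < i)).card : ℤ) - ((n : ℤ) - 1)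

/-- The coefficient of `e_{X′} ⊗ e_{X″}` in
`ẽ^q_{n+i} = (−1)^i Σ_{(X′,X″)∈Ω_{n+i}} (−q)^{I_{n+i}(X′)} e_{X′} ⊗ e_{X″}`, where `Ω_{n+i}`
consists of pairs of disjoint sets with `X′ ∪ X″ = {1,…,n} ∖ {i}` and `|X′|` odd. -/
def tildeCoefQ (n : ℕ) (q : ℝ) (i : ℕ) (X' X'' : Finset ℕ) : ℂ :=
  if X' ∪ X'' = (Finset.Icc 1 n) \ {i} ∧ Disjoint X' X'' ∧ Odd X'.card then
    ((-1 : ℂ) ^ i) * ((-(q : ℂ)) ^ (Ihigh n i X'))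
  else 0

/-- `S ⊗ S ⊗ S` with the inner product making the `e_A ⊗ e_B ⊗ e_C` orthonormal. -/
abbrev T3 (n : ℕ) : Type := EuclideanSpace ℂ (SIdx n × SIdx n × SIdx n)

/-- `v_q = Σ_{i=1}^n q^i e_{{i}} ⊗ ẽ^q_{n+i}` in coordinates w.r.t. `e_A ⊗ e_B ⊗ e_C`. -/
def vVecQ (n : ℕ) (q : ℝ) : T3 n := WithLp.toLp 2 fun (p : SIdx n × SIdx n × SIdx n) =>
  ∑ i ∈ Finset.Icc 1 n,
    if (p.1 : Finset ℕ) = {i} then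
      ((q : ℂ) ^ i) * tildeCoefQ n q i (p.2.1 : Finset ℕ) (p.2.2 : Finset ℕ)
    else 0

/-- `w_q = Σ_{j=1}^n q^{−j} ẽ^q_{n+j} ⊗ e_{{j}}` in coordinates w.r.t. `e_A ⊗ e_B ⊗ e_C`. -/
def wVecQ (n : ℕ) (q : ℝ) : T3 n := WithLp.toLp 2 fun (p : SIdx n × SIdx n × SIdx n) =>
  ∑ j ∈ Finset.Icc 1 n,
    if (p.2.2 : Finset ℕ) = {j} then
      ((q : ℂ) ^ (-(j : ℤ))) * tildeCoefQ n q j (p.1 : Finset ℕ) (p.2.1 : Finset ℕ)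
    else 0

/-! ### Auxiliary lemmas -/

lemma sum_coe_single {n : ℕ} (Z : Finset ℕ) (hZ : Z ∈ (Finset.Icc 1 n).powerset)
    (f : SIdx n → ℂ) :
    (∑ A : SIdx n, (if (A : Finset ℕ) = Z then f A else 0)) = f ⟨Z, hZ⟩ := by
  rw [Finset.sum_eq_single_of_mem (⟨Z, hZ⟩ : SIdx n) (Finset.mem_univ _)]
  · simp
  · intro b _ hb
    rw [if_neg]
    exact fun h => hb (Subtype.ext h)

lemma inner_vw_eq (n : ℕ) (q : ℝ) :
    (inner ℂ (vVecQ n q) (wVecQ n q) : ℂ) =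
      ∑ i ∈ Finset.Icc 1 n, ∑ j ∈ Finset.Icc 1 n, ∑ B : SIdx n,
        (starRingEnd ℂ) ((q : ℂ) ^ i * tildeCoefQ n q i (B : Finset ℕ) {j}) *
          ((q : ℂ) ^ (-(j : ℤ)) * tildeCoefQ n q j {i} (B : Finset ℕ)) := by
  have step1 : (inner ℂ (vVecQ n q) (wVecQ n q) : ℂ) =
      ∑ i ∈ Finset.Icc 1 n, ∑ j ∈ Finset.Icc 1 n, ∑ p : SIdx n × SIdx n × SIdx n,
        (if (p.1 : Finset ℕ) = {i} then
          (starRingEnd ℂ) ((q : ℂ) ^ i * tildeCoefQ n q i (p.2.1 : Finset ℕ) (p.2.2 : Finset ℕ)) *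
            (if (p.2.2 : Finset ℕ) = {j} then
              (q : ℂ) ^ (-(j : ℤ)) * tildeCoefQ n q j (p.1 : Finset ℕ) (p.2.1 : Finset ℕ)
             else 0)
         else 0) := by
    rw [PiLp.inner_apply]
    have : ∀ p : SIdx n × SIdx n × SIdx n,
        (inner ℂ (vVecQ n q p) (wVecQ n q p) : ℂ) =
        ∑ i ∈ Finset.Icc 1 n, ∑ j ∈ Finset.Icc 1 n,
        (if (p.1 : Finset ℕ) = {i} then
          (starRingEnd ℂ) ((q : ℂ) ^ i * tildeCoefQ n q i (p.2.1 : Finset ℕ) (p.2.2 : Finset ℕ)) *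
            (if (p.2.2 : Finset ℕ) = {j} then
              (q : ℂ) ^ (-(j : ℤ)) * tildeCoefQ n q j (p.1 : Finset ℕ) (p.2.1 : Finset ℕ)
             else 0)
         else 0) := by
      intro p
      rw [RCLike.inner_apply', vVecQ, wVecQ, PiLp.toLp_apply, PiLp.toLp_apply, map_sum, Finset.sum_mul_sum]
      refine Finset.sum_congr rfl fun i _ => Finset.sum_congr rfl fun j _ => ?_
      rw [apply_ite (starRingEnd ℂ), map_zero, ite_mul, zero_mul]
    rw [Finset.sum_congr rfl fun p _ => this p]
    rw [Finset.sum_comm]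
    exact Finset.sum_congr rfl fun i _ => Finset.sum_comm
  rw [step1]
  refine Finset.sum_congr rfl fun i hi => Finset.sum_congr rfl fun j hj => ?_
  have hiP : ({i} : Finset ℕ) ∈ (Finset.Icc 1 n).powerset := by
    simpa [Finset.mem_powerset, Finset.singleton_subset_iff] using hi
  have hjP : ({j} : Finset ℕ) ∈ (Finset.Icc 1 n).powerset := by
    simpa [Finset.mem_powerset, Finset.singleton_subset_iff] using hj
  rw [Fintype.sum_prod_type]
  have pull : ∀ (P : Prop) [Decidable P] (h : SIdx n × SIdx n → ℂ),
      (∑ BC : SIdx n × SIdx n, if P then h BC else 0)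
        = if P then (∑ BC : SIdx n × SIdx n, h BC) else 0 := by
    intro P _ h; split <;> simp
  calc (∑ A : SIdx n, ∑ BC : SIdx n × SIdx n,
        if (A : Finset ℕ) = {i} then
          (starRingEnd ℂ) ((q : ℂ) ^ i * tildeCoefQ n q i (BC.1 : Finset ℕ) (BC.2 : Finset ℕ)) *
            (if (BC.2 : Finset ℕ) = {j} then
              (q : ℂ) ^ (-(j : ℤ)) * tildeCoefQ n q j (A : Finset ℕ) (BC.1 : Finset ℕ)
             else 0)
         else 0)
      = ∑ A : SIdx n, if (A : Finset ℕ) = {i} then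
          (∑ BC : SIdx n × SIdx n,
            (starRingEnd ℂ) ((q : ℂ) ^ i * tildeCoefQ n q i (BC.1 : Finset ℕ) (BC.2 : Finset ℕ)) *
              (if (BC.2 : Finset ℕ) = {j} then
                (q : ℂ) ^ (-(j : ℤ)) * tildeCoefQ n q j (A : Finset ℕ) (BC.1 : Finset ℕ)
               else 0)) else 0 := Finset.sum_congr rfl fun A _ => pull _ _
    _ = ∑ BC : SIdx n × SIdx n,
            (starRingEnd ℂ) ((q : ℂ) ^ i * tildeCoefQ n q i (BC.1 : Finset ℕ) (BC.2 : Finset ℕ)) *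
              (if (BC.2 : Finset ℕ) = {j} then
                (q : ℂ) ^ (-(j : ℤ)) * tildeCoefQ n q j ({i} : Finset ℕ) (BC.1 : Finset ℕ)
               else 0) := by
        rw [sum_coe_single _ hiP]
    _ = ∑ B : SIdx n, ∑ C : SIdx n,
            (if (C : Finset ℕ) = {j} then
            (starRingEnd ℂ) ((q : ℂ) ^ i * tildeCoefQ n q i (B : Finset ℕ) (C : Finset ℕ)) *
              ((q : ℂ) ^ (-(j : ℤ)) * tildeCoefQ n q j ({i} : Finset ℕ) (B : Finset ℕ))
               else 0) := by
        rw [Fintype.sum_prod_type]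
        exact Finset.sum_congr rfl fun B _ => Finset.sum_congr rfl fun C _ => by
          rw [mul_ite, mul_zero]
    _ = ∑ B : SIdx n,
        (starRingEnd ℂ) ((q : ℂ) ^ i * tildeCoefQ n q i (B : Finset ℕ) {j}) *
          ((q : ℂ) ^ (-(j : ℤ)) * tildeCoefQ n q j {i} (B : Finset ℕ)) :=
        Finset.sum_congr rfl fun B _ => by rw [sum_coe_single _ hjP]

lemma coef2_eq_zero {n i j : ℕ} {q : ℝ} {B : Finset ℕ} (hi : i ∈ Finset.Icc 1 n)
    (h : ¬ (i ≠ j ∧ B = Finset.Icc 1 n \ {i, j})) :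
    tildeCoefQ n q j {i} B = 0 := by
  rw [tildeCoefQ, if_neg]
  rintro ⟨h1, h2, -⟩
  apply h
  have hiB : i ∉ B := Finset.disjoint_singleton_left.mp h2
  have hmem : ∀ k, (k = i ∨ k ∈ B) ↔ (k ∈ Finset.Icc 1 n ∧ k ≠ j) := by
    intro k
    have := Finset.ext_iff.mp h1 k
    simpa [Finset.mem_union, Finset.mem_sdiff] using this
  have hij : i ≠ j := ((hmem i).mp (Or.inl rfl)).2
  refine ⟨hij, ?_⟩
  ext k
  simp only [Finset.mem_sdiff, Finset.mem_insert, Finset.mem_singleton]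
  constructor
  · intro hk
    have := (hmem k).mp (Or.inr hk)
    refine ⟨this.1, ?_⟩
    rintro (rfl | rfl)
    · exact hiB hk
    · exact this.2 rfl
  · rintro ⟨hk, hk2⟩
    rcases (hmem k).mpr ⟨hk, fun h' => hk2 (Or.inr h')⟩ with h' | h'
    · exact absurd (Or.inl h') hk2
    · exact h'

lemma card_B0 {n i j : ℕ} (hn : 2 ≤ n) (hi : i ∈ Finset.Icc 1 n) (hj : j ∈ Finset.Icc 1 n)
    (hij : i ≠ j) :
    (Finset.Icc 1 n \ {i, j}).card = n - 2 := by
  rw [Finset.card_sdiff_of_subset]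
  · rw [Nat.card_Icc, Finset.card_insert_of_notMem (by simp [hij]), Finset.card_singleton]
    omega
  · intro k hk
    simp only [Finset.mem_insert, Finset.mem_singleton] at hk
    rcases hk with rfl | rfl <;> assumption

lemma coef1_val {n i j : ℕ} {q : ℝ} (hn : 3 ≤ n) (hodd : Odd n) (hi : i ∈ Finset.Icc 1 n)
    (hj : j ∈ Finset.Icc 1 n) (hij : i ≠ j) :
    tildeCoefQ n q i (Finset.Icc 1 n \ {i, j}) {j}
      = ((-1 : ℂ) ^ i) * ((-(q : ℂ)) ^ (Ihigh n i (Finset.Icc 1 n \ {i, j}))) := by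
  rw [tildeCoefQ, if_pos]
  have hi' := hi
  have hj' := hj
  simp only [Finset.mem_Icc] at hi' hj'
  refine ⟨?_, ?_, ?_⟩
  · ext k
    simp only [Finset.mem_union, Finset.mem_sdiff, Finset.mem_insert, Finset.mem_singleton,
      Finset.mem_Icc]
    constructor
    · rintro (⟨hk, hk2⟩ | rfl)
      · exact ⟨hk, fun h => hk2 (Or.inl h)⟩
      · exact ⟨hj', fun h => hij h.symm⟩
    · rintro ⟨hk, hk2⟩
      by_cases hkj : k = j
      · exact Or.inr hkj
      · exact Or.inl ⟨hk, by rintro (rfl | rfl) <;> simp_all⟩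
  · simp
  · rw [card_B0 (by omega) hi hj hij]
    obtain ⟨t, ht⟩ := hodd
    exact ⟨t - 1, by omega⟩

lemma coef2_val {n i j : ℕ} {q : ℝ} (hi : i ∈ Finset.Icc 1 n) (hj : j ∈ Finset.Icc 1 n)
    (hij : i ≠ j) :
    tildeCoefQ n q j {i} (Finset.Icc 1 n \ {i, j})
      = ((-1 : ℂ) ^ j) * ((-(q : ℂ)) ^ (Ihigh n j {i})) := by
  rw [tildeCoefQ, if_pos]
  simp only [Finset.mem_Icc] at hi hj
  refine ⟨?_, ?_, ?_⟩
  · ext k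
    simp only [Finset.mem_union, Finset.mem_sdiff, Finset.mem_insert, Finset.mem_singleton,
      Finset.mem_Icc]
    constructor
    · rintro (rfl | ⟨hk, hk2⟩)
      · exact ⟨hi, hij⟩
      · exact ⟨hk, fun h => hk2 (Or.inr h)⟩
    · rintro ⟨hk, hk2⟩
      by_cases hki : k = i
      · exact Or.inl hki
      · exact Or.inr ⟨hk, by rintro (rfl | rfl) <;> simp_all⟩
  · simp
  · simp

lemma gauss (n : ℕ) : 2 * (∑ k ∈ Finset.Icc 1 n, (k : ℤ)) = n * (n + 1) := by
  induction n with
  | zero => simp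
  | succ n ih =>
      rw [Finset.sum_Icc_succ_top (by omega)]
      push_cast
      push_cast at ih
      ring_nf
      ring_nf at ih
      linarith

lemma Ihigh_singleton {n i j : ℕ} :
    Ihigh n j {i} = (i : ℤ) - n + (if i < j then 1 else 0) - ((n : ℤ) - 1) := by
  rw [Ihigh, I1, Finset.filter_singleton]
  split_ifs with h <;> simp

lemma filcard {n i j : ℕ} (hi : i ∈ Finset.Icc 1 n) (hj : j ∈ Finset.Icc 1 n) :
    (((Finset.Icc 1 n \ {i, j}).filter (fun k => k < i)).card : ℤ)
      = (i : ℤ) - 1 - (if j < i then 1 else 0) := by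
  simp only [Finset.mem_Icc] at hi hj
  have hset : (Finset.Icc 1 n \ {i, j}).filter (fun k => k < i)
      = Finset.Icc 1 (i - 1) \ {j} := by
    ext k
    simp only [Finset.mem_filter, Finset.mem_sdiff, Finset.mem_Icc, Finset.mem_insert,
      Finset.mem_singleton]
    omega
  rw [hset]
  by_cases hji : j < i
  · rw [Finset.card_sdiff_of_subset (by simp only [Finset.singleton_subset_iff, Finset.mem_Icc]; omega)]
    rw [Nat.card_Icc, Finset.card_singleton, if_pos hji]
    push_cast
    omega
  · have hdj : Disjoint (Finset.Icc 1 (i - 1)) {j} := by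
      simp only [Finset.disjoint_singleton_right, Finset.mem_Icc]
      omega
    rw [Finset.sdiff_eq_self_of_disjoint hdj]
    rw [Nat.card_Icc, if_neg hji]
    push_cast
    omega

lemma Ihigh_B0 {n i j : ℕ} (hn : 2 ≤ n) (hi : i ∈ Finset.Icc 1 n) (hj : j ∈ Finset.Icc 1 n)
    (hij : i ≠ j) :
    Ihigh n i (Finset.Icc 1 n \ {i, j})
      = (∑ k ∈ Finset.Icc 1 n, (k : ℤ)) - i - j - ((n : ℤ) - 2) * n
        + ((i : ℤ) - 1 - (if j < i then 1 else 0)) - ((n : ℤ) - 1) := by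
  have hsub : ({i, j} : Finset ℕ) ⊆ Finset.Icc 1 n := by
    intro k hk
    simp only [Finset.mem_insert, Finset.mem_singleton] at hk
    rcases hk with rfl | rfl <;> assumption
  have hsum : (∑ k ∈ Finset.Icc 1 n \ {i, j}, (k : ℤ))
      = (∑ k ∈ Finset.Icc 1 n, (k : ℤ)) - i - j := by
    rw [Finset.sum_sdiff_eq_sub hsub, Finset.sum_insert (by simp [hij]), Finset.sum_singleton]
    ring
  have hcard : ((Finset.Icc 1 n \ {i, j}).card : ℤ) = (n : ℤ) - 2 := by
    rw [card_B0 hn hi hj hij]; omega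
  rw [Ihigh, I1, hsum, hcard, filcard hi hj]

lemma parity {n i j : ℕ} (hn : 3 ≤ n) (hodd : Odd n) (hi : i ∈ Finset.Icc 1 n)
    (hj : j ∈ Finset.Icc 1 n) (hij : i ≠ j) :
    Even ((i : ℤ) + j + Ihigh n i (Finset.Icc 1 n \ {i, j}) + Ihigh n j {i}
      + ((n + 1) / 2 : ℕ)) := by
  set m : ℕ := (n + 1) / 2 with hm_def
  obtain ⟨t, ht⟩ := hodd
  have hm : (n : ℤ) = 2 * (m : ℤ) - 1 := by
    simp only [hm_def]; push_cast; omega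
  have h2 : ((n : ℤ) + 1) = 2 * m := by omega
  have hG : (∑ k ∈ Finset.Icc 1 n, (k : ℤ)) = (n : ℤ) * m := by
    have hg := gauss n
    have h3 : (n : ℤ) * ((n : ℤ) + 1) = 2 * ((n : ℤ) * m) := by rw [h2]; ring
    linarith
  rw [Ihigh_B0 (by omega) hi hj hij, Ihigh_singleton]
  rcases lt_or_gt_of_ne hij with hlt | hgt
  · rw [if_neg (by omega), if_pos hlt]
    refine ⟨-(m : ℤ) * m + m + 1 + i, ?_⟩
    rw [hG, hm]
    ring
  · rw [if_pos hgt, if_neg (by omega)]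
    refine ⟨-(m : ℤ) * m + m + i, ?_⟩
    rw [hG, hm]
    ring

lemma neg_one_zpow_eq_of_even {z : ℤ} {m : ℕ} (h : Even (z + m)) :
    (-1 : ℂ) ^ z = (-1 : ℂ) ^ m := by
  obtain ⟨c, hc⟩ := h
  have h1 : (-1 : ℂ) ≠ 0 := by norm_num
  have key : (-1 : ℂ) ^ z * (-1 : ℂ) ^ (m : ℤ) = 1 := by
    rw [← zpow_add₀ h1, hc, show c + c = 2 * c by ring, zpow_mul]
    norm_num
  have key2 : (-1 : ℂ) ^ (m : ℤ) * (-1 : ℂ) ^ (m : ℤ) = 1 := by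
    rw [← zpow_add₀ h1, show (m : ℤ) + m = 2 * m by ring, zpow_mul]
    norm_num
  calc (-1 : ℂ) ^ z = (-1 : ℂ) ^ z * ((-1 : ℂ) ^ (m : ℤ) * (-1 : ℂ) ^ (m : ℤ)) := by
        rw [key2, mul_one]
    _ = ((-1 : ℂ) ^ z * (-1 : ℂ) ^ (m : ℤ)) * (-1 : ℂ) ^ (m : ℤ) := by ring
    _ = (-1 : ℂ) ^ (m : ℤ) := by rw [key, one_mul]
    _ = (-1 : ℂ) ^ m := zpow_natCast _ _

/-- The real (positive, for `i ≠ j`) magnitude of the `(i,j)` contribution. -/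
def rTerm (n : ℕ) (q : ℝ) (i j : ℕ) : ℝ :=
  if i = j then 0
  else q ^ ((i : ℤ) - j + Ihigh n i (Finset.Icc 1 n \ {i, j}) + Ihigh n j {i})

lemma term_eval {n i j : ℕ} {q : ℝ} (hn : 3 ≤ n) (hodd : Odd n) (hq : 0 < q)
    (hi : i ∈ Finset.Icc 1 n) (hj : j ∈ Finset.Icc 1 n) :
    (∑ B : SIdx n,
      (starRingEnd ℂ) ((q : ℂ) ^ i * tildeCoefQ n q i (B : Finset ℕ) {j}) *
        ((q : ℂ) ^ (-(j : ℤ)) * tildeCoefQ n q j {i} (B : Finset ℕ)))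
      = (-1 : ℂ) ^ ((n + 1) / 2) * ((rTerm n q i j : ℝ) : ℂ) := by
  by_cases hij : i = j
  · rw [Finset.sum_eq_zero, rTerm, if_pos hij]
    · simp
    · intro B _
      rw [coef2_eq_zero hi (by simp [hij]), mul_zero, mul_zero]
  · have hB0 : Finset.Icc 1 n \ {i, j} ∈ (Finset.Icc 1 n).powerset := by
      simp only [Finset.mem_powerset]
      exact Finset.sdiff_subset
    rw [Finset.sum_eq_single_of_mem (⟨Finset.Icc 1 n \ {i, j}, hB0⟩ : SIdx n)
      (Finset.mem_univ _)]
    · show (starRingEnd ℂ) ((q : ℂ) ^ i * tildeCoefQ n q i (Finset.Icc 1 n \ {i, j}) {j}) *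
        ((q : ℂ) ^ (-(j : ℤ)) * tildeCoefQ n q j {i} (Finset.Icc 1 n \ {i, j}))
        = _
      rw [coef1_val hn hodd hi hj hij, coef2_val hi hj hij, rTerm, if_neg hij]
      have h1 : (-1 : ℂ) ≠ 0 := by norm_num
      have h2 : (q : ℂ) ≠ 0 := Complex.ofReal_ne_zero.mpr (ne_of_gt hq)
      simp only [map_mul, map_pow, map_zpow₀, map_neg, map_one, Complex.conj_ofReal]
      set E1 := Ihigh n i (Finset.Icc 1 n \ {i, j})
      set E2 := Ihigh n j {i}
      calc (q : ℂ) ^ i * ((-1 : ℂ) ^ i * (-(q : ℂ)) ^ E1) *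
          ((q : ℂ) ^ (-(j : ℤ)) * ((-1 : ℂ) ^ j * (-(q : ℂ)) ^ E2))
          = (-1 : ℂ) ^ ((i : ℤ) + j + E1 + E2) * (q : ℂ) ^ ((i : ℤ) - j + E1 + E2) := by
            rw [show (-(q : ℂ)) = (-1) * (q : ℂ) by ring, mul_zpow, mul_zpow,
              ← zpow_natCast (-1 : ℂ) i, ← zpow_natCast (-1 : ℂ) j, ← zpow_natCast (q : ℂ) i,
              zpow_add₀ h1, zpow_add₀ h1, zpow_add₀ h1,
              show (i : ℤ) - j + E1 + E2 = i + (-(j : ℤ)) + E1 + E2 by ring,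
              zpow_add₀ h2, zpow_add₀ h2, zpow_add₀ h2]
            ring
        _ = (-1 : ℂ) ^ ((n + 1) / 2) * (((q ^ ((i : ℤ) - j + E1 + E2) : ℝ)) : ℂ) := by
            rw [neg_one_zpow_eq_of_even (parity hn hodd hi hj hij), Complex.ofReal_zpow]
    · intro b _ hb
      rw [coef2_eq_zero hi, mul_zero, mul_zero]
      rintro ⟨-, h2⟩
      exact hb (Subtype.ext h2)

/-- `(−1)^{(n+1)/2} ⟨v_q, w_q⟩ > 0`; in particular `⟨v_q, w_q⟩ ≠ 0` (the `q`-deformed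
analogue of Proposition A.2). -/
theorem stmt8 (n : ℕ) (hn : 3 ≤ n) (hodd : Odd n) (q : ℝ) (hq : 0 < q) :
    0 < (-1 : ℂ) ^ ((n + 1) / 2) * (inner ℂ (vVecQ n q) (wVecQ n q) : ℂ) ∧
      (inner ℂ (vVecQ n q) (wVecQ n q) : ℂ) ≠ 0 := by
  have hodd' := hodd
  have hinner : (inner ℂ (vVecQ n q) (wVecQ n q) : ℂ)
      = (-1 : ℂ) ^ ((n + 1) / 2)
        * ((∑ i ∈ Finset.Icc 1 n, ∑ j ∈ Finset.Icc 1 n, rTerm n q i j : ℝ) : ℂ) := by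
    rw [inner_vw_eq]
    rw [Finset.sum_congr rfl fun i hi => Finset.sum_congr rfl fun j hj =>
      term_eval hn hodd hq hi hj]
    rw [Complex.ofReal_sum, Finset.mul_sum]
    refine Finset.sum_congr rfl fun i _ => ?_
    rw [Complex.ofReal_sum, Finset.mul_sum]
  have hterm_nonneg : ∀ i j : ℕ, 0 ≤ rTerm n q i j := by
    intro i j
    rw [rTerm]
    split_ifs
    · exact le_refl 0
    · exact le_of_lt (zpow_pos hq _)
  have hR : 0 < ∑ i ∈ Finset.Icc 1 n, ∑ j ∈ Finset.Icc 1 n, rTerm n q i j := by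
    refine Finset.sum_pos' (fun i _ => Finset.sum_nonneg fun j _ => hterm_nonneg i j)
      ⟨1, ?_, ?_⟩
    · simp only [Finset.mem_Icc]
      omega
    · refine Finset.sum_pos' (fun j _ => hterm_nonneg 1 j) ⟨2, ?_, ?_⟩
      · simp only [Finset.mem_Icc]
        omega
      · rw [rTerm, if_neg (by omega)]
        exact zpow_pos hq _
  have hpos : 0 < (-1 : ℂ) ^ ((n + 1) / 2) * (inner ℂ (vVecQ n q) (wVecQ n q) : ℂ) := by
    rw [hinner, ← mul_assoc, ← pow_add]
    rw [Even.neg_one_pow ⟨(n + 1) / 2, rfl⟩, one_mul]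
    exact Complex.zero_lt_real.mpr hR
  refine ⟨hpos, fun h0 => ?_⟩
  rw [h0, mul_zero] at hpos
  exact lt_irrefl 0 hpos

end
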